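/- Run the algorithm with parameters c̄ ≥ 1 and γ₁ > 0. Then for every k ≥ 0: F_{γ_{k+1}}(x^{k+1}) − F* ≤ (τ_k²/γ_{k+1})·[ ((1 − τ₀)·γ₁/τ₀²)·(F_{γ₀}(x⁰) − F*) + (‖A‖²/2)·‖x⁰ − x*‖² + S_k·D_U ], where S_k := γ₁²·c̄²·Σ_{i=0}^{k} [ (L_b − 1)/(i + c̄) + 1/(i + c̄)² ], τ₀ = 1/c̄, γ₀ := γ₁·c̄/(c̄ − 1) when c̄ > 1, and when c̄ = 1 the term ((1 − τ₀)·γ₁/τ₀²)·(F_{γ₀}(x⁰) − F*) is taken to be zero (since τ₀ = 1). -/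

import Mathlib

open scoped RealInnerProductSpace BigOperators


lemma aux_limit {a c D : ℝ} (hD : 0 ≤ D)
    (h : ∀ t : ℝ, 0 < t → t < 1 → a + (1-t)/2 * D ≤ c) : a + D/2 ≤ c := by
  refine le_of_forall_pos_le_add fun ε hε => ?_
  set t : ℝ := min (1/2) (ε/(D+1)) with ht
  have htpos : 0 < t := lt_min (by norm_num) (div_pos hε (by linarith))
  have htlt : t < 1 := lt_of_le_of_lt (min_le_left _ _) (by norm_num)
  have h1 := h t htpos htlt
  have h2 : t ≤ ε/(D+1) := min_le_right _ _
  have h3 : t * (D+1) ≤ ε := by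
    rw [div_eq_mul_inv] at h2
    have := mul_le_mul_of_nonneg_right h2 (by linarith : (0:ℝ) ≤ D+1)
    calc t * (D+1) ≤ ε * (D+1)⁻¹ * (D+1) := this
    _ = ε := by field_simp
  nlinarith [mul_nonneg htpos.le hD]

lemma aux_comb_norm {p : ℕ} (a bb s : EuclideanSpace ℝ (Fin p)) (t : ℝ) :
    ‖((1-t)•a + t•bb) - s‖^2
      = (1-t)*‖a-s‖^2 + t*‖bb-s‖^2 - t*(1-t)*‖a-bb‖^2 := by
  have h1 : ∀ w : EuclideanSpace ℝ (Fin p), ‖w‖^2 = ⟪w,w⟫ :=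
    fun w => (real_inner_self_eq_norm_sq w).symm
  have hc : ((1-t)•a + t•bb) - s = (1-t)•(a-s) + t•(bb-s) := by module
  rw [hc]
  have hab : a - bb = (a - s) - (bb - s) := by module
  rw [hab]
  simp only [h1, inner_add_left, inner_add_right, inner_sub_left, inner_sub_right,
    real_inner_smul_left, real_inner_smul_right]
  rw [real_inner_comm bb a, real_inner_comm s a, real_inner_comm s bb]
  ring

set_option maxHeartbeats 2000000 in
theorem stmt_14
    {n : ℕ} (hn : 1 ≤ n)
    (U : Set (EuclideanSpace ℝ (Fin n)))
    (hUne : U.Nonempty) (hUcl : IsClosed U) (hUcx : Convex ℝ U)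
    (φ : EuclideanSpace ℝ (Fin n) → EReal)
    (hφbot : ∀ v, φ v ≠ ⊥)
    (hφlsc : LowerSemicontinuous φ)
    (hφcx : ∀ v w : EuclideanSpace ℝ (Fin n), ∀ a c : ℝ, 0 ≤ a → 0 ≤ c → a + c = 1 →
      φ (a • v + c • w) ≤ (a : EReal) * φ v + (c : EReal) * φ w)
    (hφdom : ∃ v ∈ U, φ v ≠ ⊤)
    (b : EuclideanSpace ℝ (Fin n) → ℝ)
    (hbcont : Continuous b)
    (hbsc : StrongConvexOn U 1 b)
    (ustar : ℝ → EuclideanSpace ℝ (Fin n) → EuclideanSpace ℝ (Fin n))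
    (humem : ∀ γ > (0:ℝ), ∀ z, ustar γ z ∈ U)
    (hufin : ∀ γ > (0:ℝ), ∀ z, φ (ustar γ z) ≠ ⊤)
    (humax : ∀ γ > (0:ℝ), ∀ z, ∀ v ∈ U,
      (⟪z, v⟫ : EReal) - φ v - ((γ * b v : ℝ) : EReal)
        ≤ (⟪z, ustar γ z⟫ : EReal) - φ (ustar γ z) - ((γ * b (ustar γ z) : ℝ) : EReal))
    (φs : ℝ → EuclideanSpace ℝ (Fin n) → ℝ)
    (hφs : ∀ γ z, φs γ z = ⟪z, ustar γ z⟫ - (φ (ustar γ z)).toReal - γ * b (ustar γ z))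
    {p : ℕ} (hp : 1 ≤ p)
    (A : EuclideanSpace ℝ (Fin n) →L[ℝ] EuclideanSpace ℝ (Fin p))
    (hAnorm : 0 < ‖A‖)
    (b' : EuclideanSpace ℝ (Fin n) → EuclideanSpace ℝ (Fin n))
    (Lb : ℝ) (hLb : 1 ≤ Lb)
    (hbgrad : ∀ v, HasGradientAt b (b' v) v)
    (hbgradlip : LipschitzWith (Real.toNNReal Lb) b')
    (uc : EuclideanSpace ℝ (Fin n)) (hucU : uc ∈ U) (hbuc : b uc = 0)
    (hucmin : ∀ v ∈ U, b uc ≤ b v)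
    (hbsand : ∀ v ∈ U, (1/2) * ‖v - uc‖^2 ≤ b v ∧ b v ≤ (Lb/2) * ‖v - uc‖^2)
    (DU : ℝ)
    (hDUbdd : BddAbove (b '' {v | v ∈ U ∧ φ v ≠ ⊤}))
    (hDU : DU = sSup (b '' {v | v ∈ U ∧ φ v ≠ ⊤}))
    (f : EuclideanSpace ℝ (Fin p) → EReal)
    (hf : ∀ x, f x = ⨆ v ∈ U, ((⟪x, A v⟫ : EReal) - φ v))
    (g : EuclideanSpace ℝ (Fin p) → EReal)
    (hgbot : ∀ y, g y ≠ ⊥)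
    (hgdom : ∃ y, g y ≠ ⊤)
    (hglsc : LowerSemicontinuous g)
    (hgcx : ∀ y w : EuclideanSpace ℝ (Fin p), ∀ a c : ℝ, 0 ≤ a → 0 ≤ c → a + c = 1 →
      g (a • y + c • w) ≤ (a : EReal) * g y + (c : EReal) * g w)
    (prox : ℝ → EuclideanSpace ℝ (Fin p) → EuclideanSpace ℝ (Fin p))
    (hprox : ∀ β > (0:ℝ), ∀ x y,
      g (prox β x) + (((2*β)⁻¹ * ‖prox β x - x‖^2 : ℝ) : EReal)
        ≤ g y + (((2*β)⁻¹ * ‖y - x‖^2 : ℝ) : EReal))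
    (hproxu : ∀ β > (0:ℝ), ∀ x y,
      (∀ w, g y + (((2*β)⁻¹ * ‖y - x‖^2 : ℝ) : EReal)
          ≤ g w + (((2*β)⁻¹ * ‖w - x‖^2 : ℝ) : EReal)) → y = prox β x)
    (cb γ1 : ℝ) (hcb : 1 ≤ cb) (hγ1 : 0 < γ1)
    (τ : ℕ → ℝ) (hτ : ∀ k : ℕ, τ k = 1/((k:ℝ) + cb))
    (γs : ℕ → ℝ) (hγs : ∀ k : ℕ, γs k = γ1 * cb / ((k:ℝ) + cb - 1))
    (x xt xh : ℕ → EuclideanSpace ℝ (Fin p))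
    (hxt0 : xt 0 = x 0) (hx0dom : f (x 0) + g (x 0) ≠ ⊤)
    (hxh : ∀ k : ℕ, xh k = (1 - τ k) • x k + τ k • xt k)
    (hxrec : ∀ k : ℕ, x (k+1)
        = prox (γs (k+1)/‖A‖^2) (xh k - (γs (k+1)/‖A‖^2) • A (ustar (γs (k+1)) ((ContinuousLinearMap.adjoint A) (xh k)))))
    (hxtrec : ∀ k : ℕ, xt (k+1) = xt k - (τ k)⁻¹ • (xh k - x (k+1)))
    (xs : EuclideanSpace ℝ (Fin p)) (Fs : ℝ)
    (hFs : f xs + g xs = (Fs : EReal)) (hFmin : ∀ y, (Fs : EReal) ≤ f y + g y)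
    (S : ℕ → ℝ)
    (hS : ∀ k : ℕ, S k = γ1^2 * cb^2 *
        ∑ i ∈ Finset.range (k+1), ((Lb - 1)/((i:ℝ) + cb) + 1/((i:ℝ) + cb)^2))
    :
    ∀ k : ℕ,
      (((φs (γs (k+1)) ((ContinuousLinearMap.adjoint A) (x (k+1))) : ℝ) : EReal) + g (x (k+1))) - (Fs : EReal)
        ≤ (((τ k)^2 / γs (k+1) : ℝ) : EReal) *
            ( (((1 - τ 0) * γ1 / (τ 0)^2 : ℝ) : EReal) *
                ((((φs (γs 0) ((ContinuousLinearMap.adjoint A) (x 0)) : ℝ) : EReal) + g (x 0)) - (Fs : EReal))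
              + ((‖A‖^2/2 * ‖x 0 - xs‖^2 + S k * DU : ℝ) : EReal) ) := by

  classical
  -- ### basic notation and positivity facts
  have hAt : ∀ (w : EuclideanSpace ℝ (Fin p)) (v : EuclideanSpace ℝ (Fin n)),
      ⟪(ContinuousLinearMap.adjoint A) w, v⟫ = ⟪w, A v⟫ := fun w v =>
    ContinuousLinearMap.adjoint_inner_left A v w
  have hAtnorm : ‖(ContinuousLinearMap.adjoint A : EuclideanSpace ℝ (Fin p) →L[ℝ] EuclideanSpace ℝ (Fin n))‖ = ‖A‖ :=
    LinearIsometryEquiv.norm_map ContinuousLinearMap.adjoint A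
  have hcb0 : (0:ℝ) < cb := lt_of_lt_of_le one_pos hcb
  have hone : ∀ k : ℕ, (0:ℝ) < (k:ℝ) + cb := by
    intro k
    have := Nat.cast_nonneg (α := ℝ) k
    linarith
  have hτpos : ∀ k : ℕ, 0 < τ k := by
    intro k; rw [hτ k]; exact div_pos one_pos (hone k)
  have hτle1 : ∀ k : ℕ, τ k ≤ 1 := by
    intro k; rw [hτ k, div_le_one (hone k)]
    have := Nat.cast_nonneg (α := ℝ) k
    linarith
  have hγpos : ∀ k : ℕ, 0 < γs (k+1) := by
    intro k; rw [hγs (k+1)]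
    refine div_pos (mul_pos hγ1 hcb0) ?_
    push_cast
    have := Nat.cast_nonneg (α := ℝ) k
    linarith
  have hγs1 : γs 1 = γ1 := by
    have h1 : ((1:ℕ):ℝ) + cb - 1 = cb := by push_cast; ring
    rw [hγs 1, h1, mul_div_assoc, div_self hcb0.ne', mul_one]
  -- ### real-valued version of the maximality hypothesis
  have humaxR : ∀ γ : ℝ, 0 < γ → ∀ z v, v ∈ U → φ v ≠ ⊤ →
      ⟪z, v⟫ - (φ v).toReal - γ * b v ≤ φs γ z := by
    intro γ hγ z v hv hvt
    have h := humax γ hγ z v hv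
    rw [← EReal.coe_toReal hvt (hφbot v),
        ← EReal.coe_toReal (hufin γ hγ z) (hφbot _)] at h
    rw [hφs]
    exact_mod_cast h
  -- ### L1 : strong concavity inequality at the maximizer
  have L1 : ∀ γ : ℝ, 0 < γ → ∀ z v, v ∈ U → φ v ≠ ⊤ →
      (⟪z, v⟫ - (φ v).toReal - γ * b v) + γ * ‖v - ustar γ z‖^2 / 2 ≤ φs γ z := by
    intro γ hγ z v hv hvt
    have huU : ustar γ z ∈ U := humem γ hγ z
    have hut : φ (ustar γ z) ≠ ⊤ := hufin γ hγ z
    have key : ∀ t : ℝ, 0 < t → t < 1 →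
        (⟪z, v⟫ - (φ v).toReal - γ * b v) + (1-t)/2 * (γ * ‖v - ustar γ z‖^2) ≤ φs γ z := by
      intro t ht0 ht1
      set u := ustar γ z with hu
      set w := (1-t) • u + t • v with hw
      have hwU : w ∈ U := hUcx huU hv (by linarith) ht0.le (by ring)
      have hφw := hφcx u v (1-t) t (by linarith) ht0.le (by ring)
      rw [← EReal.coe_toReal hut (hφbot u), ← EReal.coe_toReal hvt (hφbot v)] at hφw
      have hcmb : ((1-t : ℝ) : EReal) * (((φ u).toReal : ℝ) : EReal)
            + ((t:ℝ):EReal) * (((φ v).toReal : ℝ) : EReal)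
          = (((1-t) * (φ u).toReal + t * (φ v).toReal : ℝ) : EReal) := by norm_cast
      rw [hcmb] at hφw
      have hwt : φ w ≠ ⊤ := by
        intro hh; rw [hh] at hφw
        exact (EReal.coe_ne_top _) (top_le_iff.1 hφw)
      have hwR : (φ w).toReal ≤ (1-t) * (φ u).toReal + t * (φ v).toReal := by
        have := EReal.toReal_le_toReal hφw (hφbot w) (EReal.coe_ne_top _)
        rwa [EReal.toReal_coe] at this
      have hbw : b w ≤ (1-t) * b u + t * b v - (1-t)*t*(1/2 * ‖u - v‖^2) := by
        have := hbsc.2 huU hv (by linarith : (0:ℝ) ≤ 1-t) ht0.le (by ring)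
        simpa [smul_eq_mul] using this
      have hbw' : γ * b w ≤ γ * ((1-t) * b u + t * b v - (1-t)*t*(1/2 * ‖u - v‖^2)) :=
        mul_le_mul_of_nonneg_left hbw hγ.le
      have hinner : ⟪z, w⟫ = (1-t) * ⟪z, u⟫ + t * ⟪z, v⟫ := by
        rw [hw, inner_add_right, real_inner_smul_right, real_inner_smul_right]
      have hm := humaxR γ hγ z w hwU hwt
      have hφsz : φs γ z = ⟪z, u⟫ - (φ u).toReal - γ * b u := hφs γ z
      have hnv : ‖v - u‖ = ‖u - v‖ := norm_sub_rev _ _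
      have e2 : (1-t)*(⟪z, u⟫ - (φ u).toReal - γ * b u)
            + t*(⟪z, v⟫ - (φ v).toReal - γ * b v)
            + γ*((1-t)*t*(1/2 * ‖u - v‖^2))
          ≤ ⟪z, w⟫ - (φ w).toReal - γ * b w := by
        rw [hinner]; linarith [hwR, hbw']
      rw [hφsz] at hm
      have e3 : t*((⟪z, v⟫ - (φ v).toReal - γ * b v) + (1-t)/2 * (γ * ‖u - v‖^2))
          ≤ t * (⟪z, u⟫ - (φ u).toReal - γ * b u) := by
        nlinarith [e2, hm]
      have e5 := le_of_mul_le_mul_left e3 ht0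
      rw [hφsz, hnv]
      exact e5
    have := aux_limit (a := ⟪z, v⟫ - (φ v).toReal - γ * b v)
      (c := φs γ z) (D := γ * ‖v - ustar γ z‖^2) (by positivity) key
    linarith
  -- ### L2 : descent (smoothness) inequality
  have L2 : ∀ γ : ℝ, 0 < γ → ∀ z z',
      φs γ z' ≤ φs γ z + ⟪z' - z, ustar γ z⟫ + ‖z' - z‖^2/(2*γ) := by
    intro γ hγ z z'
    have h1 := L1 γ hγ z (ustar γ z') (humem γ hγ z') (hufin γ hγ z')
    have h2 : φs γ z' = ⟪z', ustar γ z'⟫ - (φ (ustar γ z')).toReal - γ * b (ustar γ z') :=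
      hφs γ z'
    have h3 : ⟪z' - z, ustar γ z'⟫ = ⟪z', ustar γ z'⟫ - ⟪z, ustar γ z'⟫ :=
      inner_sub_left _ _ _
    have h4 : ⟪z' - z, ustar γ z'⟫
        = ⟪z' - z, ustar γ z⟫ + ⟪z' - z, ustar γ z' - ustar γ z⟫ := by
      rw [inner_sub_right]; ring
    have h5 : ⟪z' - z, ustar γ z' - ustar γ z⟫ ≤ ‖z' - z‖ * ‖ustar γ z' - ustar γ z‖ :=
      real_inner_le_norm _ _
    have h6 : ‖z' - z‖ * ‖ustar γ z' - ustar γ z‖ - γ * ‖ustar γ z' - ustar γ z‖^2/2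
        ≤ ‖z' - z‖^2/(2*γ) := by
      rw [le_div_iff₀ (by positivity : (0:ℝ) < 2*γ)]
      nlinarith [sq_nonneg (‖z' - z‖ - γ * ‖ustar γ z' - ustar γ z‖)]
    linarith
  -- ### L3 : subgradient inequality
  have L3 : ∀ γ : ℝ, 0 < γ → ∀ z z',
      φs γ z + ⟪z' - z, ustar γ z⟫ ≤ φs γ z' := by
    intro γ hγ z z'
    have h := humaxR γ hγ z' (ustar γ z) (humem γ hγ z) (hufin γ hγ z)
    have h2 : φs γ z = ⟪z, ustar γ z⟫ - (φ (ustar γ z)).toReal - γ * b (ustar γ z) := hφs γ z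
    have h3 : ⟪z' - z, ustar γ z⟫ = ⟪z', ustar γ z⟫ - ⟪z, ustar γ z⟫ :=
      inner_sub_left _ _ _
    linarith
  -- ### facts about f, g at xs and along the iterates
  obtain ⟨v0, hv0U, hv0t⟩ := hφdom
  have hfle : ∀ v, v ∈ U → φ v ≠ ⊤ → ∀ xx : EuclideanSpace ℝ (Fin p),
      ((⟪xx, A v⟫ - (φ v).toReal : ℝ) : EReal) ≤ f xx := by
    intro v hv hvt xx
    rw [hf]
    have h1 : (⟪xx, A v⟫ : EReal) - φ v
        ≤ ⨆ v ∈ U, ((⟪xx, A v⟫ : EReal) - φ v) :=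
      le_biSup (f := fun v => (⟪xx, A v⟫ : EReal) - φ v) hv
    rw [← EReal.coe_toReal hvt (hφbot v)] at h1
    exact_mod_cast h1
  have hfxs_bot : f xs ≠ ⊥ := by
    intro hh
    have := hfle v0 hv0U hv0t xs
    rw [hh] at this
    exact (EReal.coe_ne_bot _) (le_bot_iff.1 this)
  have hfxs_top : f xs ≠ ⊤ := by
    intro hh
    rw [hh, EReal.top_add_of_ne_bot (hgbot xs)] at hFs
    exact (EReal.coe_ne_top Fs) hFs.symm
  have hgxs_top : g xs ≠ ⊤ := by
    intro hh
    rw [hh, add_comm, EReal.top_add_of_ne_bot hfxs_bot] at hFs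
    exact (EReal.coe_ne_top Fs) hFs.symm
  have hFsr : (f xs).toReal + (g xs).toReal = Fs := by
    have h : (((f xs).toReal + (g xs).toReal : ℝ) : EReal) = (Fs : EReal) := by
      push_cast
      rw [EReal.coe_toReal hfxs_top hfxs_bot, EReal.coe_toReal hgxs_top (hgbot xs)]
      exact hFs
    exact_mod_cast h
  have fbound : ∀ v, v ∈ U → φ v ≠ ⊤ → ⟪xs, A v⟫ - (φ v).toReal ≤ (f xs).toReal := by
    intro v hv hvt
    have := hfle v hv hvt xs
    rw [← EReal.coe_toReal hfxs_top hfxs_bot] at this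
    exact_mod_cast this
  have hgprox : ∀ β : ℝ, 0 < β → ∀ s, g (prox β s) ≠ ⊤ := by
    intro β hβ s hh
    obtain ⟨y0, hy0⟩ := hgdom
    have h := hprox β hβ s y0
    rw [hh, EReal.top_add_of_ne_bot (EReal.coe_ne_bot _)] at h
    have h2 : g y0 + (((2*β)⁻¹ * ‖y0 - s‖^2 : ℝ) : EReal) = ⊤ := top_le_iff.1 h
    rw [← EReal.coe_toReal hy0 (hgbot y0), ← EReal.coe_add] at h2
    exact EReal.coe_ne_top _ h2
  have hgx_top : ∀ k : ℕ, g (x k) ≠ ⊤ := by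
    intro k
    cases k with
    | zero =>
      intro hh
      have hfx0_bot : f (x 0) ≠ ⊥ := by
        intro h2
        have := hfle v0 hv0U hv0t (x 0)
        rw [h2] at this
        exact (EReal.coe_ne_bot _) (le_bot_iff.1 this)
      rw [hh, add_comm, EReal.top_add_of_ne_bot hfx0_bot] at hx0dom
      exact hx0dom rfl
    | succ k =>
      rw [hxrec k]
      exact hgprox _ (div_pos (hγpos k) (by positivity)) _
  have hgcxR : ∀ (y w : EuclideanSpace ℝ (Fin p)) (a c : ℝ), g y ≠ ⊤ → g w ≠ ⊤ →
      0 ≤ a → 0 ≤ c → a + c = 1 →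
      g (a • y + c • w) ≠ ⊤ ∧
      (g (a • y + c • w)).toReal ≤ a * (g y).toReal + c * (g w).toReal := by
    intro y w a c hy hw ha hc hac
    have h := hgcx y w a c ha hc hac
    rw [← EReal.coe_toReal hy (hgbot y), ← EReal.coe_toReal hw (hgbot w)] at h
    have h2 : ((a:ℝ):EReal) * (((g y).toReal : ℝ) : EReal) + ((c:ℝ):EReal) * (((g w).toReal : ℝ):EReal)
        = ((a * (g y).toReal + c * (g w).toReal : ℝ):EReal) := by norm_cast
    rw [h2] at h
    refine ⟨fun hh => ?_, ?_⟩
    · rw [hh] at h; exact (EReal.coe_ne_top _) (top_le_iff.1 h)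
    · have := EReal.toReal_le_toReal h (hgbot _) (EReal.coe_ne_top _)
      rwa [EReal.toReal_coe] at this
  have proxR : ∀ β : ℝ, 0 < β → ∀ s w, g w ≠ ⊤ →
      (g (prox β s)).toReal + (2*β)⁻¹ * ‖prox β s - s‖^2
        ≤ (g w).toReal + (2*β)⁻¹ * ‖w - s‖^2 := by
    intro β hβ s w hw
    have h := hprox β hβ s w
    rw [← EReal.coe_toReal (hgprox β hβ s) (hgbot _), ← EReal.coe_toReal hw (hgbot w),
      ← EReal.coe_add, ← EReal.coe_add] at h
    exact_mod_cast h
  -- ### L5 : strongly convex prox inequality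
  have L5 : ∀ β : ℝ, 0 < β → ∀ s y, g y ≠ ⊤ →
      (g (prox β s)).toReal + (2*β)⁻¹ * ‖prox β s - s‖^2 + (2*β)⁻¹ * ‖y - prox β s‖^2
        ≤ (g y).toReal + (2*β)⁻¹ * ‖y - s‖^2 := by
    intro β hβ s y hy
    have key : ∀ t : ℝ, 0 < t → t < 1 →
        ((g (prox β s)).toReal + (2*β)⁻¹ * ‖prox β s - s‖^2)
            + (1-t)/2 * (β⁻¹ * ‖y - prox β s‖^2)
          ≤ (g y).toReal + (2*β)⁻¹ * ‖y - s‖^2 := by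
      intro t ht0 ht1
      set q := prox β s with hq
      have hgw := hgcxR q y (1-t) t (hgprox β hβ s) hy (by linarith) ht0.le (by ring)
      have hpr := proxR β hβ s ((1-t)•q + t•y) hgw.1
      have hnrm2 : (2*β)⁻¹ * ‖((1-t)•q + t•y) - s‖^2
          = (2*β)⁻¹ * ((1-t)*‖q-s‖^2 + t*‖y-s‖^2 - t*(1-t)*‖q-y‖^2) := by
        rw [aux_comb_norm]
      have hyq : ‖y - q‖ = ‖q - y‖ := norm_sub_rev _ _
      have step : t*((g q).toReal + (2*β)⁻¹*‖q-s‖^2) + (2*β)⁻¹*(t*(1-t)*‖q-y‖^2)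
          ≤ t*((g y).toReal + (2*β)⁻¹*‖y-s‖^2) := by
        nlinarith [hgw.2, hpr, hnrm2, ht0.le]
      have e4 : t * (((g q).toReal + (2*β)⁻¹ * ‖q - s‖^2) + (1-t)/2 * (β⁻¹ * ‖y - q‖^2))
          ≤ t * ((g y).toReal + (2*β)⁻¹ * ‖y - s‖^2) := by
        rw [hyq]
        have hββ : (2*β)⁻¹ = 2⁻¹ * β⁻¹ := by rw [mul_inv]
        rw [hββ] at step ⊢
        nlinarith [step]
      exact le_of_mul_le_mul_left e4 ht0
    have := aux_limit (a := (g (prox β s)).toReal + (2*β)⁻¹ * ‖prox β s - s‖^2)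
      (c := (g y).toReal + (2*β)⁻¹ * ‖y - s‖^2)
      (D := β⁻¹ * ‖y - prox β s‖^2) (by positivity) key
    have hββ : β⁻¹ * ‖y - prox β s‖^2 / 2 = (2*β)⁻¹ * ‖y - prox β s‖^2 := by
      rw [mul_inv]; ring
    linarith
  -- ### prox three-point inequality in gradient-step form
  have prox3 : ∀ β : ℝ, 0 < β → ∀ (xhat uv y : EuclideanSpace ℝ (Fin p)), g y ≠ ⊤ →
      (g (prox β (xhat - β • uv))).toReal + ⟪uv, prox β (xhat - β • uv) - y⟫
        ≤ (g y).toReal + (2*β)⁻¹ *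
          (‖y - xhat‖^2 - ‖y - prox β (xhat - β • uv)‖^2 - ‖prox β (xhat - β • uv) - xhat‖^2) := by
    intro β hβ xhat uv y hy
    set s := xhat - β • uv with hs
    set q := prox β s with hq
    have h := L5 β hβ s y hy
    have hsm : ‖β • uv‖^2 = β^2 * ‖uv‖^2 := by
      rw [norm_smul, Real.norm_eq_abs, mul_pow, sq_abs]
    have e1 : ‖q - s‖^2 = ‖q - xhat‖^2 + 2*β*⟪q - xhat, uv⟫ + β^2*‖uv‖^2 := by
      have hv : q - s = (q - xhat) + β • uv := by rw [hs]; abel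
      rw [hv, norm_add_sq_real, real_inner_smul_right, hsm]; ring
    have e2 : ‖y - s‖^2 = ‖y - xhat‖^2 + 2*β*⟪y - xhat, uv⟫ + β^2*‖uv‖^2 := by
      have hv : y - s = (y - xhat) + β • uv := by rw [hs]; abel
      rw [hv, norm_add_sq_real, real_inner_smul_right, hsm]; ring
    have e3 : ⟪uv, q - y⟫ = ⟪q - xhat, uv⟫ - ⟪y - xhat, uv⟫ := by
      rw [real_inner_comm (q - y) uv]
      have hv : q - y = (q - xhat) - (y - xhat) := by abel
      rw [hv, inner_sub_left]
    have e1' : (2*β)⁻¹*‖q-s‖^2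
        = (2*β)⁻¹*‖q-xhat‖^2 + ⟪q-xhat,uv⟫ + (2*β)⁻¹*β^2*‖uv‖^2 := by
      rw [e1]; field_simp
    have e2' : (2*β)⁻¹*‖y-s‖^2
        = (2*β)⁻¹*‖y-xhat‖^2 + ⟪y-xhat,uv⟫ + (2*β)⁻¹*β^2*‖uv‖^2 := by
      rw [e2]; field_simp
    linarith [h, e1', e2', e3]

  -- ### per-iteration estimate
  have key : ∀ k : ℕ,
      φs (γs (k+1)) ((ContinuousLinearMap.adjoint A) (x (k+1))) + (g (x (k+1))).toReal
        ≤ (1 - τ k) * (φs (γs k) ((ContinuousLinearMap.adjoint A) (x k)) + (g (x k)).toReal)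
          + τ k * Fs
          + (τ k)^2 * ‖A‖^2/(2*γs (k+1)) * (‖xs - xt k‖^2 - ‖xs - xt (k+1)‖^2) := by
    intro k
    have hγ' : 0 < γs (k+1) := hγpos k
    set At := (ContinuousLinearMap.adjoint A :
      EuclideanSpace ℝ (Fin p) →L[ℝ] EuclideanSpace ℝ (Fin n)) with hAtdef
    set β : ℝ := γs (k+1)/‖A‖^2 with hβdef
    have hβ : 0 < β := div_pos hγ' (by positivity)
    set ut := ustar (γs (k+1)) (At (xh k)) with hutdef
    set y := (1 - τ k) • (x k) + τ k • xs with hydef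
    have hgy_top : g y ≠ ⊤ := (hgcxR (x k) xs (1-τ k) (τ k) (hgx_top k) hgxs_top
      (by linarith [hτle1 k]) (hτpos k).le (by ring)).1
    have hxk1 : x (k+1) = prox β (xh k - β • (A ut)) := hxrec k
    -- (a) descent inequality for the smoothed function
    have ha' := L2 (γs (k+1)) hγ' (At (xh k)) (At (x (k+1)))
    have hiadj1 : ⟪At (x (k+1)) - At (xh k), ut⟫ = ⟪x (k+1) - xh k, A ut⟫ := by
      rw [← map_sub, hAt]
    have hnadj : ‖At (x (k+1)) - At (xh k)‖ ≤ ‖A‖ * ‖x (k+1) - xh k‖ := by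
      rw [← map_sub]
      calc ‖At ((x (k+1)) - xh k)‖ ≤ ‖At‖ * ‖x (k+1) - xh k‖ := At.le_opNorm _
      _ = ‖A‖ * ‖x (k+1) - xh k‖ := by rw [hAtdef, hAtnorm]
    have hnadj2 : ‖At (x (k+1)) - At (xh k)‖^2/(2*γs (k+1))
        ≤ ‖A‖^2/(2*γs (k+1)) * ‖x (k+1) - xh k‖^2 := by
      have h1 := pow_le_pow_left₀ (norm_nonneg _) hnadj 2
      rw [mul_pow] at h1
      rw [div_mul_eq_mul_div]
      exact (div_le_div_iff_of_pos_right (by positivity)).2 h1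
    have ha : φs (γs (k+1)) (At (x (k+1))) ≤ φs (γs (k+1)) (At (xh k))
        + ⟪x (k+1) - xh k, A ut⟫ + ‖A‖^2/(2*γs (k+1)) * ‖x (k+1) - xh k‖^2 := by
      rw [← hiadj1]; linarith [ha', hnadj2]
    -- (b) subgradient inequality
    have hb' := L3 (γs (k+1)) hγ' (At (xh k)) (At y)
    have hiadj2 : ⟪At y - At (xh k), ut⟫ = ⟪y - xh k, A ut⟫ := by
      rw [← map_sub, hAt]
    have hb : φs (γs (k+1)) (At (xh k)) + ⟪y - xh k, A ut⟫ ≤ φs (γs (k+1)) (At y) := by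
      rw [← hiadj2]; exact hb'
    -- (c) prox step
    have hc' := prox3 β hβ (xh k) (A ut) y hgy_top
    rw [← hxk1] at hc'
    have hκ : (2*β)⁻¹ = ‖A‖^2/(2*γs (k+1)) := by
      rw [hβdef]; rw [div_eq_mul_inv, div_eq_mul_inv]
      rw [mul_inv, mul_inv, inv_inv]
      ring
    rw [hκ] at hc'
    -- (d) convexity of g
    have hd : (g y).toReal ≤ (1 - τ k) * (g (x k)).toReal + τ k * (g xs).toReal := by
      rw [hydef]
      exact (hgcxR (x k) xs (1-τ k) (τ k) (hgx_top k) hgxs_top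
        (by linarith [hτle1 k]) (hτpos k).le (by ring)).2
    -- (e) smoothed objective at the combined point
    have he : φs (γs (k+1)) (At y)
        ≤ (1 - τ k) * (φs (γs k) (At (x k))) + τ k * (f xs).toReal := by
      rcases eq_or_lt_of_le (hτle1 k) with hτ1 | hτlt
      · have hyxs : y = xs := by rw [hydef, hτ1]; simp
        have hbv : 0 ≤ b (ustar (γs (k+1)) (At xs)) := by
          rw [← hbuc]; exact hucmin _ (humem (γs (k+1)) hγ' _)
        have h1 : φs (γs (k+1)) (At xs) = ⟪At xs, ustar (γs (k+1)) (At xs)⟫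
            - (φ (ustar (γs (k+1)) (At xs))).toReal
            - γs (k+1) * b (ustar (γs (k+1)) (At xs)) := hφs (γs (k+1)) (At xs)
        have h2 : ⟪At xs, ustar (γs (k+1)) (At xs)⟫ = ⟪xs, A (ustar (γs (k+1)) (At xs))⟫ :=
          hAt _ _
        have h3 := fbound (ustar (γs (k+1)) (At xs)) (humem (γs (k+1)) hγ' _)
          (hufin (γs (k+1)) hγ' _)
        rw [hyxs, hτ1]
        linarith [mul_nonneg hγ'.le hbv, h1, h2, h3]
      · have hkcb : 1 < (k:ℝ) + cb := by
          have h0 := hτlt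
          rw [hτ k] at h0
          exact (div_lt_one (hone k)).1 h0
        have hγk : 0 < γs k := by
          rw [hγs k]
          exact div_pos (mul_pos hγ1 hcb0) (by linarith)
        have hγγ : (1 - τ k) * γs k = γs (k+1) := by
          rw [hτ k, hγs k, hγs (k+1)]
          push_cast
          have h1 : (k:ℝ) + cb ≠ 0 := (hone k).ne'
          have h2 : (k:ℝ) + cb - 1 ≠ 0 := by intro hh; rw [sub_eq_zero] at hh; linarith
          have e : (k:ℝ) + 1 + cb - 1 = (k:ℝ) + cb := by ring
          rw [e, one_sub_div h1, div_mul_div_comm, div_eq_div_iff (by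
            exact mul_ne_zero h1 h2) h1]
          ring
        set v := ustar (γs (k+1)) (At y) with hvdef
        have hvU : v ∈ U := humem (γs (k+1)) hγ' _
        have hvfin : φ v ≠ ⊤ := hufin (γs (k+1)) hγ' _
        have h1 : φs (γs (k+1)) (At y) = ⟪At y, v⟫ - (φ v).toReal - γs (k+1) * b v :=
          hφs (γs (k+1)) (At y)
        have h2 : ⟪At y, v⟫ = ⟪y, A v⟫ := hAt _ _
        have h3 : ⟪y, A v⟫ = (1 - τ k) * ⟪x k, A v⟫ + τ k * ⟪xs, A v⟫ := by
          rw [hydef, inner_add_left, real_inner_smul_left, real_inner_smul_left]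
        have h4 := humaxR (γs k) hγk (At (x k)) v hvU hvfin
        have h5 : ⟪At (x k), v⟫ = ⟪x k, A v⟫ := hAt _ _
        rw [h5] at h4
        have h6 := fbound v hvU hvfin
        have h4' := mul_le_mul_of_nonneg_left h4 (by linarith : (0:ℝ) ≤ 1 - τ k)
        have h6' := mul_le_mul_of_nonneg_left h6 (hτpos k).le
        have hγγb : (1 - τ k) * (γs k * b v) = γs (k+1) * b v := by rw [← hγγ]; ring
        rw [h1, h2, h3]
        linarith [h4', h6', hγγb]
    -- vector identities
    have hτne : τ k ≠ 0 := (hτpos k).ne'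
    have hy1 : y - xh k = τ k • (xs - xt k) := by
      rw [hydef, hxh k]; module
    have hv2 : τ k • xt (k+1) = τ k • xt k - (xh k - x (k+1)) := by
      rw [hxtrec k, smul_sub (τ k) (xt k) ((τ k)⁻¹ • (xh k - x (k+1))), smul_smul,
        mul_inv_cancel₀ hτne, one_smul]
    have hv3 : x (k+1) = τ k • xt (k+1) - τ k • xt k + xh k := by
      rw [hv2]; abel
    have hy2 : y - x (k+1) = τ k • (xs - xt (k+1)) := by
      rw [hydef, hv3, hxh k]; module
    have hn1 : ‖y - xh k‖^2 = (τ k)^2 * ‖xs - xt k‖^2 := by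
      rw [hy1, norm_smul, Real.norm_eq_abs, mul_pow, sq_abs]
    have hn2 : ‖y - x (k+1)‖^2 = (τ k)^2 * ‖xs - xt (k+1)‖^2 := by
      rw [hy2, norm_smul, Real.norm_eq_abs, mul_pow, sq_abs]
    have hip : ⟪A ut, x (k+1) - y⟫ = ⟪x (k+1) - xh k, A ut⟫ - ⟪y - xh k, A ut⟫ := by
      rw [← real_inner_comm (A ut) (x (k+1) - y)]
      have hv : x (k+1) - y = (x (k+1) - xh k) - (y - xh k) := by abel
      rw [hv, inner_sub_left]
    have hFs2 : τ k * Fs = τ k * (f xs).toReal + τ k * (g xs).toReal := by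
      rw [← hFsr]; ring
    have comb1 : φs (γs (k+1)) (At (x (k+1))) + (g (x (k+1))).toReal
        ≤ φs (γs (k+1)) (At y) + (g y).toReal
          + ‖A‖^2/(2*γs (k+1)) * (‖y - xh k‖^2 - ‖y - x (k+1)‖^2) := by
      linarith [ha, hb, hc', hip]
    have comb2 : φs (γs (k+1)) (At y) + (g y).toReal
        ≤ (1 - τ k) * (φs (γs k) (At (x k)) + (g (x k)).toReal) + τ k * Fs := by
      linarith [hd, he, hFs2]
    have comb3 : ‖A‖^2/(2*γs (k+1)) * (‖y - xh k‖^2 - ‖y - x (k+1)‖^2)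
        = (τ k)^2 * ‖A‖^2/(2*γs (k+1)) * (‖xs - xt k‖^2 - ‖xs - xt (k+1)‖^2) := by
      rw [hn1, hn2]; ring
    linarith [comb1, comb2, comb3]
  -- ### telescoping
  set P : ℕ → ℝ := fun j =>
    φs (γs j) ((ContinuousLinearMap.adjoint A) (x j)) + (g (x j)).toReal with hP
  set R : ℕ → ℝ := fun j => ‖xs - xt j‖^2 with hR
  have key' : ∀ k : ℕ, P (k+1) ≤ (1 - τ k) * P k + τ k * Fs
      + (τ k)^2 * ‖A‖^2/(2*γs (k+1)) * (R k - R (k+1)) := by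
    intro k
    simp only [hP, hR]
    exact key k
  have hval : ∀ j : ℕ, γs (j+1)/(τ j)^2 = γ1*cb*((j:ℝ)+cb) := by
    intro j
    have hK : (j:ℝ) + cb ≠ 0 := (hone j).ne'
    rw [hγs (j+1), hτ j]
    push_cast
    have e : (j:ℝ) + 1 + cb - 1 = (j:ℝ) + cb := by ring
    rw [e, div_pow, one_pow, div_div_eq_mul_div, div_one, div_mul_eq_mul_div, div_eq_iff hK]
    ring
  have hco : ∀ k : ℕ, γs (k+2)/(τ (k+1))^2*(1 - τ (k+1)) = γs (k+1)/(τ k)^2 := by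
    intro k
    have h2 : (k:ℝ) + 1 + cb ≠ 0 := by
      have := hone k; intro hh; linarith
    have e0 : (k:ℕ) + 2 = ((k:ℕ)+1) + 1 := by ring
    rw [e0, hval (k+1), hval k, hτ (k+1)]
    push_cast
    field_simp
    ring
  have hsc1 : ∀ k : ℕ, γs (k+1)/(τ k)^2 *
      ((τ k)^2*‖A‖^2/(2*γs (k+1)) * (R k - R (k+1))) = ‖A‖^2/2 * (R k - R (k+1)) := by
    intro k
    have h1 : τ k ≠ 0 := (hτpos k).ne'
    have h2 : γs (k+1) ≠ 0 := (hγpos k).ne'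
    field_simp
  have claim : ∀ k : ℕ, γs (k+1)/(τ k)^2 * (P (k+1) - Fs)
      ≤ (1 - τ 0)*γ1/(τ 0)^2 * (P 0 - Fs) + ‖A‖^2/2 * (R 0 - R (k+1)) := by
    intro k
    induction k with
    | zero =>
      have h1 := key' 0
      have h2 : P 1 - Fs ≤ (1 - τ 0)*(P 0 - Fs)
          + (τ 0)^2*‖A‖^2/(2*γs 1)*(R 0 - R 1) := by linarith
      have hpos : (0:ℝ) ≤ γs 1/(τ 0)^2 := div_nonneg (hγpos 0).le (sq_nonneg _)
      have h3 := mul_le_mul_of_nonneg_left h2 hpos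
      have e1 : γs 1/(τ 0)^2*((1 - τ 0)*(P 0 - Fs))
          = (1 - τ 0)*γ1/(τ 0)^2*(P 0 - Fs) := by rw [hγs1]; ring
      have e2 := hsc1 0
      linarith [h3, e1, e2]
    | succ k ih =>
      have h1 := key' (k+1)
      have h2 : P (k+2) - Fs ≤ (1 - τ (k+1))*(P (k+1) - Fs)
          + (τ (k+1))^2*‖A‖^2/(2*γs (k+2))*(R (k+1) - R (k+2)) := by linarith
      have hpos : (0:ℝ) ≤ γs (k+2)/(τ (k+1))^2 := div_nonneg (hγpos (k+1)).le (sq_nonneg _)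
      have h3 := mul_le_mul_of_nonneg_left h2 hpos
      have e1 : γs (k+2)/(τ (k+1))^2*((1 - τ (k+1))*(P (k+1) - Fs))
          = γs (k+1)/(τ k)^2*(P (k+1) - Fs) := by rw [← hco k]; ring
      have e2 := hsc1 (k+1)
      linarith [h3, e1, e2, ih]
  -- ### conclusion
  intro k
  have hR0 : R 0 = ‖x 0 - xs‖^2 := by
    simp only [hR]
    rw [hxt0, norm_sub_rev]
  have hDU0 : 0 ≤ DU := by
    have hmem : b v0 ∈ b '' {v | v ∈ U ∧ φ v ≠ ⊤} := ⟨v0, ⟨hv0U, hv0t⟩, rfl⟩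
    have h1 : b v0 ≤ sSup (b '' {v | v ∈ U ∧ φ v ≠ ⊤}) := le_csSup hDUbdd hmem
    have h2 : 0 ≤ b v0 := by rw [← hbuc]; exact hucmin v0 hv0U
    rw [hDU]; linarith
  have hS0 : 0 ≤ S k := by
    rw [hS k]
    apply mul_nonneg (by positivity)
    apply Finset.sum_nonneg
    intro i _
    have hio := hone i
    have h1 : 0 ≤ (Lb - 1)/((i:ℝ)+cb) := div_nonneg (by linarith) hio.le
    have h2 : 0 ≤ 1/((i:ℝ)+cb)^2 := by positivity
    linarith
  have hSk : 0 ≤ S k * DU := mul_nonneg hS0 hDU0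
  have hRk1 : 0 ≤ R (k+1) := by simp only [hR]; positivity
  have hfinal : P (k+1) - Fs ≤ (τ k)^2/γs (k+1) *
      ((1 - τ 0)*γ1/(τ 0)^2 * (P 0 - Fs) + (‖A‖^2/2 * ‖x 0 - xs‖^2 + S k * DU)) := by
    have hc2 : γs (k+1)/(τ k)^2 * (P (k+1) - Fs)
        ≤ (1 - τ 0)*γ1/(τ 0)^2 * (P 0 - Fs) + (‖A‖^2/2 * ‖x 0 - xs‖^2 + S k * DU) := by
      have h1 := claim k
      have h2 : 0 ≤ ‖A‖^2/2 * R (k+1) := mul_nonneg (by positivity) hRk1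
      rw [hR0] at h1
      linarith
    have hmul := mul_le_mul_of_nonneg_left hc2
      (div_nonneg (sq_nonneg (τ k)) (hγpos k).le)
    have hid : (τ k)^2/γs (k+1) * (γs (k+1)/(τ k)^2 * (P (k+1) - Fs)) = P (k+1) - Fs := by
      have h1 : τ k ≠ 0 := (hτpos k).ne'
      have h2 : γs (k+1) ≠ 0 := (hγpos k).ne'
      field_simp
    linarith [hmul, hid]
  simp only [hP] at hfinal
  rw [← EReal.coe_toReal (hgx_top (k+1)) (hgbot _), ← EReal.coe_toReal (hgx_top 0) (hgbot _)]
  norm_cast
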